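/- For a hyperedge e of an n-qubit system and a subset e' ⊆ e, the conjugation (∏_{i∈e'} X_i) · CZ_e · (∏_{i∈e'} X_i) equals ∏_{q⊆e'} CZ_{e\q}, where the product runs over all subsets q of e' (including q = ∅, and with the convention CZ_∅ = −1). -/

import Mathlib

open Matrix Finset

/-- Diagonal phase of the generalized controlled-Z gate `CZ_e` at basis state `a`:
`-1` if all bits of `a` in `e` are `1`, else `1`.  For `e = ∅` this is constantly `-1`. -/
def czsign {n : ℕ} (e : Finset (Fin n)) (a : Fin n → ZMod 2) : ℂ :=
  if ∀ j ∈ e, a j = 1 then -1 else 1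

/-- The generalized controlled-Z gate `CZ_e` on `(ℂ²)^⊗n` (with `CZ_∅ = -𝟙`). -/
def CZ {n : ℕ} (e : Finset (Fin n)) : Matrix (Fin n → ZMod 2) (Fin n → ZMod 2) ℂ :=
  Matrix.diagonal (czsign e)

/-- The multi-qubit Pauli-X operator `X^x`: `|a⟩ ↦ |a + x⟩`. -/
def Xmat {n : ℕ} (x : Fin n → ZMod 2) : Matrix (Fin n → ZMod 2) (Fin n → ZMod 2) ℂ :=
  fun a b => if b = a + x then 1 else 0

lemma zmod2_ne_one {x : ZMod 2} (h : x ≠ 1) : x = 0 := by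
  revert h; revert x; decide

lemma key {n : ℕ} (e e' : Finset (Fin n)) (h : e' ⊆ e) (a : Fin n → ZMod 2) :
    czsign e (a + fun j => if j ∈ e' then (1 : ZMod 2) else 0)
      = ∏ q ∈ e'.powerset, czsign (e \ q) a := by
  classical
  set B := e.filter (fun j => a j ≠ 1) with hB
  have hf : ∀ q : Finset (Fin n), czsign (e \ q) a = if B ⊆ q then -1 else 1 := by
    intro q
    unfold czsign
    congr 1
    simp only [eq_iff_iff]
    constructor
    · intro hq j hj
      rw [hB, Finset.mem_filter] at hj
      by_contra hjq
      exact hj.2 (hq j (Finset.mem_sdiff.2 ⟨hj.1, hjq⟩))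
    · intro hq j hj
      rcases Finset.mem_sdiff.1 hj with ⟨hje, hjq⟩
      by_contra hja
      exact hjq (hq (Finset.mem_filter.2 ⟨hje, hja⟩))
  rw [Finset.prod_congr rfl (fun q _ => hf q)]
  by_cases hBe : B ⊆ e'
  · by_cases hEB : e' ⊆ B
    · have hBeq : B = e' := le_antisymm hBe hEB
      have hprod : (∏ q ∈ e'.powerset, if B ⊆ q then (-1 : ℂ) else 1) = -1 := by
        have : ∀ q ∈ e'.powerset, (if B ⊆ q then (-1 : ℂ) else 1)
            = if q = e' then -1 else 1 := by
          intro q hq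
          rw [Finset.mem_powerset] at hq
          by_cases hqe : q = e'
          · simp [hqe, hBeq]
          · have : ¬ B ⊆ q := fun hc => hqe (le_antisymm hq (hBeq ▸ hc))
            simp [this, hqe]
        rw [Finset.prod_congr rfl this, Finset.prod_ite_eq' e'.powerset e' (fun _ => (-1 : ℂ))]
        simp
      rw [hprod]
      unfold czsign
      rw [if_pos]
      intro j hj
      by_cases hj' : j ∈ e'
      · have : a j = 0 := zmod2_ne_one (Finset.mem_filter.1 (hBeq ▸ hj' : j ∈ B)).2
        simp [hj', this]
      · have : a j = 1 := by
          by_contra hc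
          exact hj' (hBeq ▸ Finset.mem_filter.2 ⟨hj, hc⟩)
        simp [hj', this]
    · obtain ⟨i, hie, hiB⟩ : ∃ i ∈ e', i ∉ B := by
        rcases Finset.not_subset.1 hEB with ⟨i, h1, h2⟩
        exact ⟨i, h1, h2⟩
      have hprod : (∏ q ∈ e'.powerset, if B ⊆ q then (-1 : ℂ) else 1) = 1 := by
        refine Finset.prod_involution
          (fun q _ => if i ∈ q then q.erase i else insert i q) ?_ ?_ ?_ ?_
        · intro q hq
          have hiff : B ⊆ q ↔ B ⊆ (if i ∈ q then q.erase i else insert i q) := by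
            constructor
            · intro hc j hj
              by_cases hiq : i ∈ q
              · simp only [hiq, if_true, Finset.mem_erase]
                exact ⟨fun he => hiB (he ▸ hj), hc hj⟩
              · simp only [hiq, if_false, Finset.mem_insert]
                exact Or.inr (hc hj)
            · intro hc j hj
              have := hc hj
              by_cases hiq : i ∈ q
              · simp only [hiq, if_true, Finset.mem_erase] at this
                exact this.2
              · simp only [hiq, if_false, Finset.mem_insert] at this
                rcases this with h1 | h1
                · exact absurd (h1 ▸ hj) hiB
                · exact h1
          by_cases hc : B ⊆ q
          · rw [if_pos hc, if_pos (hiff.1 hc)]; ring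
          · rw [if_neg hc, if_neg (fun hx => hc (hiff.2 hx))]; ring
        · intro q hq _
          by_cases hiq : i ∈ q
          · simp only [hiq, if_true]
            intro hc
            exact absurd hiq (by rw [← hc]; exact Finset.notMem_erase i q)
          · simp only [hiq, if_false]
            intro hc
            exact hiq (hc ▸ Finset.mem_insert_self i q)
        · intro q hq
          rw [Finset.mem_powerset] at hq ⊢
          by_cases hiq : i ∈ q
          · simp only [hiq, if_true]
            exact (Finset.erase_subset i q).trans hq
          · simp only [hiq, if_false]
            exact Finset.insert_subset hie hq
        · intro q hq
          by_cases hiq : i ∈ q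
          · simp [hiq, Finset.insert_erase hiq]
          · simp [hiq, Finset.erase_insert hiq]
      rw [hprod]
      unfold czsign
      rw [if_neg]
      intro hc
      have hai : a i = 1 := by
        by_contra hx
        exact hiB (Finset.mem_filter.2 ⟨h hie, hx⟩)
      have := hc i (h hie)
      simp only [Pi.add_apply, if_pos hie, hai] at this
      exact absurd this (by decide)
  · have hprod : (∏ q ∈ e'.powerset, if B ⊆ q then (-1 : ℂ) else 1) = 1 := by
      refine Finset.prod_eq_one (fun q hq => ?_)
      rw [Finset.mem_powerset] at hq
      rw [if_neg (fun hc => hBe (hc.trans hq))]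
    rw [hprod]
    obtain ⟨j, hjB, hje'⟩ := Finset.not_subset.1 hBe
    rcases Finset.mem_filter.1 hjB with ⟨hje, hja⟩
    unfold czsign
    rw [if_neg]
    intro hc
    have := hc j hje
    simp [hje'] at this
    exact hja this

lemma matpart {n : ℕ} (e : Finset (Fin n)) (x : Fin n → ZMod 2) :
    Xmat x * CZ e * Xmat x = Matrix.diagonal (fun a => czsign e (a + x)) := by
  classical
  have hxx : ∀ a : Fin n → ZMod 2, a + x + x = a := by
    intro a; funext j; simp only [Pi.add_apply]
    have : x j + x j = 0 := by have h2 : ∀ y : ZMod 2, y + y = 0 := by decide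
                               exact h2 _
    rw [add_assoc, this, add_zero]
  ext a b
  rw [Matrix.mul_apply]
  have h1 : ∀ c, (Xmat x * CZ e) a c = if c = a + x then czsign e (a + x) else 0 := by
    intro c
    rw [Matrix.mul_apply]
    simp [Xmat, CZ, Matrix.diagonal_apply]
    by_cases hc : c = a + x <;> simp [hc]
  simp only [h1]
  rw [Finset.sum_eq_single (a + x)]
  · simp [Xmat, Matrix.diagonal_apply, hxx a]
    by_cases hb : b = a
    · simp [hb]
    · have : a ≠ b := fun h => hb h.symm
      simp [hb, this]
  · intro c _ hc; simp [hc]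
  · intro hc; exact absurd (Finset.mem_univ _) hc

/-- `(∏_{i∈e'} X_i) · CZ_e · (∏_{i∈e'} X_i) = ∏_{q⊆e'} CZ_{e\q}`, where the product on the
right runs over all subsets `q` of `e'` (including `q = ∅`, with the convention `CZ_∅ = -𝟙`);
since all `CZ` gates are diagonal and commute, the product is written as the diagonal matrix
of the product of the phases. -/
theorem Xprod_conj_CZ (n : ℕ) (e e' : Finset (Fin n)) (h : e' ⊆ e) :
    Xmat (fun j => if j ∈ e' then 1 else 0) * CZ e * Xmat (fun j => if j ∈ e' then 1 else 0)
      = Matrix.diagonal (fun a => ∏ q ∈ e'.powerset, czsign (e \ q) a) := by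
  rw [matpart e (fun j => if j ∈ e' then (1 : ZMod 2) else 0)]
  exact congrArg Matrix.diagonal (funext fun a => key e e' h a)
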